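/- Let n ≥ m be positive integers, k = n - m + 1, and f : ℝⁿ → ℝᵐ a function. Let ℓ = n - m - k' + 1 for some 1 ≤ k' ≤ k, and let A = {x ∈ ℝⁿ : |f(x+h) - f(x)| = o(|h|^{k'}) as h → 0}. Then 𝓗^ℓ(A ∩ f⁻¹(y)) = 0 for Lebesgue-almost every y ∈ ℝᵐ. -/

import Mathlib

open MeasureTheory Asymptotics Filter Set Metric
open scoped ENNReal NNReal

private lemma zjp_arith (n m k k' ℓ : ℕ) (hm : 0 < m) (hnm : m ≤ n) (hk : k = n - m + 1)
    (hk'1 : 1 ≤ k') (hk'2 : k' ≤ k) (hℓ : ℓ = n - m - k' + 1) : n ≤ ℓ + k' * m := by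
  obtain ⟨a, rfl⟩ := Nat.exists_eq_add_of_le hk'1
  obtain ⟨b, rfl⟩ := Nat.exists_eq_add_of_le hm
  have h : 1 + a + b ≤ (1 + a) * (0 + 1 + b) := by nlinarith
  generalize (1 + a) * (0 + 1 + b) = c at h ⊢
  omega

private lemma zjp_diam {n : ℕ} (c : Fin n → ℝ) {ρ : ℝ} (hρ : 0 ≤ ρ) :
    EMetric.diam (closedBall c ρ) ≤ ENNReal.ofReal (2 * ρ) := by
  refine EMetric.diam_le fun z hz w hw => ?_
  rw [edist_dist]
  refine ENNReal.ofReal_le_ofReal ?_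
  calc dist z w ≤ dist z c + dist c w := dist_triangle _ _ _
    _ ≤ ρ + ρ := add_le_add (mem_closedBall.1 hz) (by
        rw [dist_comm]; exact mem_closedBall.1 hw)
    _ = 2 * ρ := by ring

theorem zero_jet_points_null_fibers
    (n m : ℕ) (hm : 0 < m) (hnm : m ≤ n) (k k' : ℕ) (hk : k = n - m + 1)
    (hk'1 : 1 ≤ k') (hk'2 : k' ≤ k)
    (ℓ : ℕ) (hℓ : ℓ = n - m - k' + 1)
    (f : (Fin n → ℝ) → (Fin m → ℝ)) :
    ∀ᵐ y : Fin m → ℝ,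
      μH[(ℓ : ℝ)] ({x | (fun h => f (x + h) - f x) =o[nhds 0] fun h => ‖h‖ ^ k'}
        ∩ f ⁻¹' {y}) = 0 := by
  classical
  set A : Set (Fin n → ℝ) :=
    {x | (fun h => f (x + h) - f x) =o[nhds 0] fun h => ‖h‖ ^ k'} with hA
  have hln : n ≤ ℓ + k' * m := zjp_arith n m k k' ℓ hm hnm hk hk'1 hk'2 hℓ
  have hl1 : 1 ≤ ℓ := by omega
  have main : ∀ R : ℕ, ∀ᵐ y : Fin m → ℝ,
      μH[(ℓ : ℝ)] (A ∩ closedBall 0 R ∩ f ⁻¹' {y}) = 0 := by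
    intro R
    set s : Set (Fin n → ℝ) := A ∩ closedBall 0 R with hs
    set ε : ℕ → ℝ := fun p => (2 : ℝ)⁻¹ ^ (p + 1) with hε
    have hεpos : ∀ p, 0 < ε p := fun p => pow_pos (by norm_num) _
    have hεle : ∀ p, ε p ≤ 2⁻¹ := fun p => by
      calc (2 : ℝ)⁻¹ ^ (p + 1) ≤ 2⁻¹ ^ 1 :=
        pow_le_pow_of_le_one (by norm_num) (by norm_num) (by omega)
      _ = 2⁻¹ := pow_one _
    set F : ℕ → (Fin n → ℝ) → Set ℝ := fun p x =>
      {ρ : ℝ | 0 < ρ ∧ ρ ≤ ε p ∧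
        ∀ h : Fin n → ℝ, ‖h‖ ≤ ρ → ‖f (x + h) - f x‖ ≤ ε p * ‖h‖ ^ k'} with hF
    have hFacc : ∀ p, ∀ x ∈ s, ∀ δ > (0 : ℝ), (F p x ∩ Set.Ioo 0 δ).Nonempty := by
      intro p x hx δ hδ
      have hxA : (fun h => f (x + h) - f x) =o[nhds 0] fun h : Fin n → ℝ => ‖h‖ ^ k' := hx.1
      have h1 : ∀ᶠ h : Fin n → ℝ in nhds 0, ‖f (x + h) - f x‖ ≤ ε p * ‖h‖ ^ k' := by
        filter_upwards [hxA.def (hεpos p)] with h hh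
        simpa [Real.norm_eq_abs, abs_of_nonneg (pow_nonneg (norm_nonneg h) k')] using hh
      rcases Metric.eventually_nhds_iff.1 h1 with ⟨d, hd, hball⟩
      refine ⟨min (min (d / 2) (δ / 2)) (ε p), ⟨?_, min_le_right _ _, ?_⟩, ?_, ?_⟩
      · exact lt_min (lt_min (by linarith) (by linarith)) (hεpos p)
      · intro h hh
        apply hball
        rw [dist_zero_right]
        calc ‖h‖ ≤ min (min (d / 2) (δ / 2)) (ε p) := hh
          _ ≤ d / 2 := (min_le_left _ _).trans (min_le_left _ _)
          _ < d := by linarith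
      · exact lt_min (lt_min (by linarith) (by linarith)) (hεpos p)
      · calc min (min (d / 2) (δ / 2)) (ε p) ≤ δ / 2 :=
          (min_le_left _ _).trans (min_le_right _ _)
        _ < δ := by linarith
    have bes : ∀ p : ℕ, ∃ (t : Set (Fin n → ℝ)) (r : (Fin n → ℝ) → ℝ), t.Countable ∧ t ⊆ s ∧
        (∀ x ∈ t, r x ∈ F p x) ∧ (s ⊆ ⋃ x ∈ t, closedBall x (r x)) ∧
        (∑' x : t, volume (closedBall (x : Fin n → ℝ) (r x))) ≤ volume s + 1 :=
      fun p => Besicovitch.exists_closedBall_covering_tsum_measure_le volume one_ne_zero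
        (F p) s (hFacc p)
    choose t r tcount tsub trmem tcover htsum using bes
    haveI : ∀ p, Countable (t p) := fun p => (tcount p).to_subtype
    set G : ℕ → (Fin m → ℝ) → ℝ≥0∞ := fun p y => ∑' x : t p,
      Set.indicator (closedBall (f x) (ε p * (2 * r p x) ^ k'))
        (fun _ => ENNReal.ofReal ((2 * r p x) ^ ℓ)) y with hG
    have hGmeas : ∀ p, Measurable (G p) := fun p =>
      Measurable.ennreal_tsum fun x => measurable_const.indicator measurableSet_closedBall
    have hvols : volume s + 1 ≠ ∞ := by
      refine ENNReal.add_ne_top.2 ⟨?_, ENNReal.one_ne_top⟩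
      exact ((measure_mono inter_subset_right).trans_lt measure_closedBall_lt_top).ne
    have hGint : ∀ p, ∫⁻ y, G p y ≤ ENNReal.ofReal ((2 : ℝ)⁻¹ ^ p) * (volume s + 1) := by
      intro p
      rw [hG, lintegral_tsum
        (fun x => (measurable_const.indicator measurableSet_closedBall).aemeasurable)]
      have hterm : ∀ x : t p,
          (∫⁻ y, Set.indicator (closedBall (f (x : Fin n → ℝ)) (ε p * (2 * r p x) ^ k'))
            (fun _ => ENNReal.ofReal ((2 * r p x) ^ ℓ)) y)
          ≤ ENNReal.ofReal ((2 : ℝ)⁻¹ ^ p) *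
            volume (closedBall (x : Fin n → ℝ) (r p x)) := by
        intro x
        have hrx : 0 < r p x := (trmem p x x.2).1
        have hrε : r p x ≤ ε p := (trmem p x x.2).2.1
        have h2r0 : (0 : ℝ) ≤ 2 * r p x := by positivity
        have h2r1 : 2 * r p x ≤ 1 := by
          have := hεle p; nlinarith
        rw [lintegral_indicator_const measurableSet_closedBall,
          Real.volume_pi_closedBall _ (by positivity),
          Real.volume_pi_closedBall _ hrx.le,
          ← ENNReal.ofReal_mul (by positivity), ← ENNReal.ofReal_mul (by positivity)]
        refine ENNReal.ofReal_le_ofReal ?_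
        have h2ε : 2 * ε p = (2 : ℝ)⁻¹ ^ p := by
          rw [hε]; simp [pow_succ]; ring
        calc (2 * r p x) ^ ℓ * (2 * (ε p * (2 * r p x) ^ k')) ^ Fintype.card (Fin m)
            = (2 * ε p) ^ m * (2 * r p x) ^ (ℓ + k' * m) := by
              simp only [Fintype.card_fin]; rw [pow_add, pow_mul]; ring
          _ ≤ (2 * ε p) ^ m * (2 * r p x) ^ n :=
              mul_le_mul_of_nonneg_left (pow_le_pow_of_le_one h2r0 h2r1 hln) (by positivity)
          _ ≤ (2 : ℝ)⁻¹ ^ p * (2 * r p x) ^ n := by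
              refine mul_le_mul_of_nonneg_right ?_ (by positivity)
              rw [h2ε]
              exact (pow_le_pow_of_le_one (by positivity)
                (pow_le_one₀ (by norm_num) (by norm_num)) hm).trans_eq (pow_one _)
          _ = (2 : ℝ)⁻¹ ^ p * (2 * r p x) ^ Fintype.card (Fin n) := by
              simp [Fintype.card_fin]
      calc (∑' x : t p, ∫⁻ y, Set.indicator
            (closedBall (f (x : Fin n → ℝ)) (ε p * (2 * r p x) ^ k'))
            (fun _ => ENNReal.ofReal ((2 * r p x) ^ ℓ)) y)
          ≤ ∑' x : t p, ENNReal.ofReal ((2 : ℝ)⁻¹ ^ p) *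
              volume (closedBall (x : Fin n → ℝ) (r p x)) := ENNReal.tsum_le_tsum hterm
        _ = ENNReal.ofReal ((2 : ℝ)⁻¹ ^ p) *
              ∑' x : t p, volume (closedBall (x : Fin n → ℝ) (r p x)) := ENNReal.tsum_mul_left
        _ ≤ _ := mul_le_mul_right (htsum p) _
    have hsum : (∫⁻ y, ∑' p, G p y) ≠ ∞ := by
      rw [lintegral_tsum fun p => (hGmeas p).aemeasurable]
      refine ne_top_of_le_ne_top ?_ (ENNReal.tsum_le_tsum hGint)
      rw [ENNReal.tsum_mul_right]
      refine ENNReal.mul_ne_top ?_ hvols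
      have heq : ∀ p : ℕ, ENNReal.ofReal ((2 : ℝ)⁻¹ ^ p) = (2 : ℝ≥0∞)⁻¹ ^ p := by
        intro p
        rw [ENNReal.ofReal_pow (by norm_num : (0:ℝ) ≤ 2⁻¹)]
        congr 1
        rw [ENNReal.ofReal_inv_of_pos (by norm_num : (0:ℝ) < 2)]
        norm_num
      simp_rw [heq]
      rw [ENNReal.tsum_geometric]
      refine ENNReal.inv_ne_top.2 ?_
      rw [ENNReal.one_sub_inv_two]
      exact ENNReal.inv_ne_zero.2 ENNReal.ofNat_ne_top
    filter_upwards [ae_lt_top (Measurable.ennreal_tsum hGmeas) hsum] with y hy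
    have hG0 : Tendsto (fun p => G p y) atTop (nhds 0) :=
      ENNReal.tendsto_atTop_zero_of_tsum_ne_top hy.ne
    set u : ∀ p : ℕ, t p → Set (Fin n → ℝ) := fun p x =>
      if y ∈ closedBall (f (x : Fin n → ℝ)) (ε p * (2 * r p x) ^ k')
        then closedBall (x : Fin n → ℝ) (r p x) else ∅ with hu
    have hle : μH[(ℓ : ℝ)] (A ∩ closedBall 0 R ∩ f ⁻¹' {y}) ≤
        liminf (fun p => ∑' i : t p, EMetric.diam (u p i) ^ (ℓ : ℝ)) atTop := by
      refine Measure.hausdorffMeasure_le_liminf_tsum (ℓ : ℝ) _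
        (fun p => ENNReal.ofReal ((2 : ℝ)⁻¹ ^ p)) ?_ u ?_ ?_
      · have : Tendsto (fun p : ℕ => (2 : ℝ)⁻¹ ^ p) atTop (nhds 0) :=
          tendsto_pow_atTop_nhds_zero_of_lt_one (by norm_num) (by norm_num)
        simpa using ENNReal.tendsto_ofReal this
      · refine Eventually.of_forall fun p => fun x => ?_
        rw [hu]
        dsimp only
        split_ifs with hmem
        · have hrx : 0 < r p x := (trmem p x x.2).1
          have hrε : r p x ≤ ε p := (trmem p x x.2).2.1
          refine (zjp_diam _ hrx.le).trans (ENNReal.ofReal_le_ofReal ?_)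
          have h2ε : 2 * ε p = (2 : ℝ)⁻¹ ^ p := by
            rw [hε]; simp [pow_succ]; ring
          linarith [h2ε]
        · simp
      · refine Eventually.of_forall fun p => fun z hz => ?_
        have hzs : z ∈ s := ⟨hz.1.1, hz.1.2⟩
        have hzy : f z = y := hz.2
        rcases mem_iUnion₂.1 (tcover p hzs) with ⟨x, hxt, hzx⟩
        refine mem_iUnion.2 ⟨⟨x, hxt⟩, ?_⟩
        have hrx : 0 < r p x := (trmem p x hxt).1
        have hflat := (trmem p x hxt).2.2
        have hdist : dist z x ≤ r p x := mem_closedBall.1 hzx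
        have hmem : y ∈ closedBall (f x) (ε p * (2 * r p x) ^ k') := by
          rw [mem_closedBall, ← hzy, dist_eq_norm]
          have h1 : ‖z - x‖ ≤ r p x := by rw [← dist_eq_norm]; exact hdist
          have h2 := hflat (z - x) h1
          rw [show x + (z - x) = z by abel] at h2
          refine h2.trans ?_
          refine mul_le_mul_of_nonneg_left ?_ (hεpos p).le
          exact pow_le_pow_left₀ (norm_nonneg _) (h1.trans (by linarith)) k'
        rw [hu]
        dsimp only
        rw [if_pos hmem]
        exact hzx
    have hbound : ∀ p, (∑' i : t p, EMetric.diam (u p i) ^ (ℓ : ℝ)) ≤ G p y := by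
      intro p
      refine ENNReal.tsum_le_tsum fun x => ?_
      have hrx : 0 < r p x := (trmem p x x.2).1
      have h2r0 : (0 : ℝ) ≤ 2 * r p x := by positivity
      rw [hu]
      dsimp only
      split_ifs with hmem
      · rw [Set.indicator_of_mem hmem]
        calc EMetric.diam (closedBall (x : Fin n → ℝ) (r p x)) ^ (ℓ : ℝ)
            ≤ (ENNReal.ofReal (2 * r p x)) ^ (ℓ : ℝ) :=
              ENNReal.rpow_le_rpow (zjp_diam _ hrx.le) (by positivity)
          _ = (ENNReal.ofReal (2 * r p x)) ^ ℓ := ENNReal.rpow_natCast _ _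
          _ = ENNReal.ofReal ((2 * r p x) ^ ℓ) := (ENNReal.ofReal_pow h2r0 _).symm
      · rw [Set.indicator_of_notMem hmem]
        rw [show EMetric.diam (∅ : Set (Fin n → ℝ)) = 0 from Metric.ediam_empty, ENNReal.zero_rpow_of_pos (by positivity)]
    refine le_antisymm ?_ zero_le
    have hlim : liminf (fun p => ∑' i : t p, EMetric.diam (u p i) ^ (ℓ : ℝ)) atTop ≤
        liminf (fun p => G p y) atTop := liminf_le_liminf (Eventually.of_forall hbound)
    rw [hG0.liminf_eq] at hlim
    exact hle.trans hlim
  filter_upwards [ae_all_iff.2 main] with y hy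
  have hcover : A ∩ f ⁻¹' {y} = ⋃ R : ℕ, A ∩ closedBall 0 R ∩ f ⁻¹' {y} := by
    ext z
    simp only [Set.mem_iUnion, Set.mem_inter_iff]
    constructor
    · rintro ⟨hz1, hz2⟩
      obtain ⟨R, hR⟩ := exists_nat_ge ‖z‖
      exact ⟨R, ⟨hz1, by simpa [mem_closedBall_zero_iff] using hR⟩, hz2⟩
    · rintro ⟨R, ⟨h1, _⟩, h2⟩
      exact ⟨h1, h2⟩
  rw [hcover]
  exact measure_iUnion_null hy
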